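/- Let W₀ ⊆ ℝ^d be a compact set whose linear span is all of ℝ^d. Then W₀ admits a barycentric spanner: there exist x₁, …, x_d ∈ W₀ such that every x ∈ W₀ can be written as x = Σ_{i=1}^d c_i x_i with coefficients c_i ∈ [−1, 1]. -/

import Mathlib

/-- **Existence of a barycentric spanner** (Awerbuch–Kleinberg, Proposition 3.1, existence part).
If `W₀ ⊆ ℝ^d` is compact and its linear span is all of `ℝ^d`, then there exist
`x₁, …, x_d ∈ W₀` such that every `x ∈ W₀` is a linear combination of the `xᵢ`
with coefficients in `[-1, 1]`. -/
theorem barycentric_spanner_exists (d : ℕ)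
    (W₀ : Set (EuclideanSpace ℝ (Fin d)))
    (hcompact : IsCompact W₀)
    (hspan : Submodule.span ℝ W₀ = ⊤) :
    ∃ x : Fin d → EuclideanSpace ℝ (Fin d),
      (∀ i, x i ∈ W₀) ∧
      ∀ y ∈ W₀, ∃ c : Fin d → ℝ,
        (∀ i, c i ∈ Set.Icc (-1 : ℝ) 1) ∧ y = ∑ i, c i • x i := by
  classical
  by_cases hW : W₀.Nonempty
  swap
  · -- W₀ is empty, hence the span is ⊥, so the space is trivial and `d = 0`.
    have hWe : W₀ = ∅ := Set.not_nonempty_iff_eq_empty.mp hW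
    rw [hWe] at hspan
    simp only [Submodule.span_empty] at hspan
    have hsub : Subsingleton (EuclideanSpace ℝ (Fin d)) := by
      refine subsingleton_of_forall_eq 0 fun x => ?_
      have : x ∈ (⊥ : Submodule ℝ (EuclideanSpace ℝ (Fin d))) := by
        rw [hspan]; trivial
      simpa using this
    have hd : d = 0 := by
      have h1 : Module.finrank ℝ (EuclideanSpace ℝ (Fin d)) = d :=
        finrank_euclideanSpace_fin
      have h2 : Module.finrank ℝ (EuclideanSpace ℝ (Fin d)) = 0 :=
        Module.finrank_zero_of_subsingleton
      omega
    haveI : IsEmpty (Fin d) := by rw [hd]; infer_instance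
    exact ⟨fun i => isEmptyElim i, fun i => isEmptyElim i, fun y hy => by
      rw [hWe] at hy; exact absurd hy (Set.notMem_empty y)⟩
  obtain ⟨w₀, hw₀⟩ := hW
  set b : Module.Basis (Fin d) ℝ (EuclideanSpace ℝ (Fin d)) :=
    (EuclideanSpace.basisFun (Fin d) ℝ).toBasis with hb
  set D : (Fin d → EuclideanSpace ℝ (Fin d)) → ℝ := fun v => b.det v with hD
  -- continuity of the determinant functional
  have hDcont : Continuous D := by
    have hrw : D = fun v => Matrix.det (Matrix.of fun i j => (v j) i) := by
      funext v
      show b.det v = _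
      rw [Module.Basis.det_apply]
      congr 1
    rw [hrw]
    apply Continuous.matrix_det
    apply continuous_pi; intro i
    apply continuous_pi; intro j
    exact ((EuclideanSpace.proj i).continuous).comp (continuous_apply j)
  -- the compact set of candidate tuples
  set S : Set (Fin d → EuclideanSpace ℝ (Fin d)) := Set.pi Set.univ (fun _ => W₀) with hS
  have hScomp : IsCompact S := isCompact_univ_pi (fun _ => hcompact)
  have hSne : S.Nonempty := ⟨fun _ => w₀, fun i _ => hw₀⟩
  obtain ⟨x, hxS, hxmax⟩ :=
    hScomp.exists_isMaxOn hSne (continuous_abs.comp hDcont).continuousOn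
  have hxW : ∀ i, x i ∈ W₀ := fun i => hxS i (Set.mem_univ i)
  -- there is a tuple with nonzero determinant
  obtain ⟨s, hsW, hsspan, hsli⟩ := exists_linearIndependent ℝ W₀
  rw [hspan] at hsspan
  haveI : FiniteDimensional ℝ (EuclideanSpace ℝ (Fin d)) := by infer_instance
  have hsspan' : Submodule.span ℝ (Set.range ((↑) : s → EuclideanSpace ℝ (Fin d))) = ⊤ := by
    rwa [Subtype.range_coe]
  let sb : Module.Basis s ℝ (EuclideanSpace ℝ (Fin d)) := Module.Basis.mk hsli hsspan'.ge
  haveI : Fintype s := FiniteDimensional.fintypeBasisIndex sb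
  have hcard : Fintype.card s = d := by
    have := Module.finrank_eq_card_basis sb
    rw [finrank_euclideanSpace_fin] at this
    omega
  let e : s ≃ Fin d := Fintype.equivFinOfCardEq hcard
  have hxne : D x ≠ 0 := by
    have hunit : IsUnit (b.det (sb.reindex e)) := b.isUnit_det (sb.reindex e)
    have hne : D (⇑(sb.reindex e)) ≠ 0 := by
      intro h
      rw [hD] at h
      simp only [h] at hunit
      exact (not_isUnit_zero hunit)
    have hmem : (⇑(sb.reindex e)) ∈ S := by
      intro i _
      have : sb.reindex e i = ((e.symm i : s) : EuclideanSpace ℝ (Fin d)) := by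
        rw [Module.Basis.reindex_apply, Module.Basis.mk_apply]
      rw [this]
      exact hsW (e.symm i).2
    have hle : |D (⇑(sb.reindex e))| ≤ |D x| := hxmax hmem
    intro h
    rw [h, abs_zero] at hle
    exact hne (abs_eq_zero.mp (le_antisymm hle (abs_nonneg _)))
  -- x is a basis
  have hunit : IsUnit (b.det x) := isUnit_iff_ne_zero.mpr hxne
  obtain ⟨hxli, hxspan⟩ := (Module.Basis.is_basis_iff_det b).mpr hunit
  let bx : Module.Basis (Fin d) ℝ (EuclideanSpace ℝ (Fin d)) := Module.Basis.mk hxli hxspan.ge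
  refine ⟨x, hxW, fun y hy => ?_⟩
  set c : Fin d → ℝ := fun i => bx.repr y i with hc
  have hyx : y = ∑ i, c i • x i := by
    conv_lhs => rw [← bx.sum_repr y]
    refine Finset.sum_congr rfl fun i _ => ?_
    rw [hc, Module.Basis.mk_apply]
  -- Cramer's rule via the alternating determinant map
  have key : ∀ k, b.det (Function.update x k y) = c k * D x := by
    intro k
    rw [hyx, AlternatingMap.map_update_sum]
    rw [Finset.sum_eq_single k]
    · rw [AlternatingMap.map_update_smul, Function.update_eq_self, smul_eq_mul, hD]
    · intro i _ hik
      rw [AlternatingMap.map_update_smul]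
      have hzero : b.det (Function.update x k (x i)) = 0 := by
        apply b.det.map_eq_zero_of_eq _ _ (Ne.symm hik)
        · rw [Function.update_self, Function.update_of_ne hik]
      rw [hzero, smul_zero]
    · intro h
      exact absurd (Finset.mem_univ k) h
  refine ⟨c, fun k => ?_, hyx⟩
  have hmem : Function.update x k y ∈ S := by
    intro i _
    by_cases hik : i = k
    · subst hik; rw [Function.update_self]; exact hy
    · rw [Function.update_of_ne hik]; exact hxW i
  have hle : |b.det (Function.update x k y)| ≤ |D x| := hxmax hmem
  rw [key k, abs_mul] at hle
  have hpos : (0 : ℝ) < |D x| := abs_pos.mpr hxne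
  have hck : |c k| ≤ 1 := by
    nlinarith [abs_nonneg (c k)]
  rw [Set.mem_Icc]
  exact abs_le.mp hck
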